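/- arXiv:2510.23735 — 7 statements merged into one kernel-verified Lean document; each statement's English description precedes it below -/
import Mathlib

section
/- For the vanishing ideal I(Z_{n,m}) of the locus Z_{n,m} of all 0/1 matrices in Mat_{n×m}(C) with at most one nonzero entry in each row and column, the associated graded ideal gr I(Z_{n,m}) equals the ideal I_{n,m} generated by all products x_{i,j}x_{i,j'} and x_{i,j}x_{i',j} of variables sharing a row or column. -/
open MvPolynomial

/-- A rook placement on the `n × m` board. -/
def IsRookPlacement {n m : ℕ} (R : Finset (Fin n × Fin m)) : Prop :=
  ∀ p ∈ R, ∀ q ∈ R, p ≠ q → p.1 ≠ q.1 ∧ p.2 ≠ q.2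

/-- The associated graded ideal `gr I`, generated by the top-degree homogeneous
components `τ(f)` of all nonzero `f ∈ I`. -/
noncomputable def grIdeal {σ : Type*} (I : Ideal (MvPolynomial σ ℂ)) :
    Ideal (MvPolynomial σ ℂ) :=
  Ideal.span {g | ∃ f ∈ I, f ≠ 0 ∧ g = homogeneousComponent f.totalDegree f}

/-- The locus `Z_{n,m}` of all 0/1 matrices, viewed as points of `ℂ^{n×m}`,
with at most one nonzero entry in each row and column (matrices of rook
placements). -/
def rookLocus (n m : ℕ) : Set ((Fin n × Fin m) → ℂ) :=
  {z | ∃ R : Finset (Fin n × Fin m), IsRookPlacement R ∧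
        ∀ p, z p = if p ∈ R then 1 else 0}

/-- The ideal `I_{n,m}` generated by all products of two variables in the same
row and all products of two variables in the same column. -/
noncomputable def idealInm (n m : ℕ) : Ideal (MvPolynomial (Fin n × Fin m) ℂ) :=
  Ideal.span
    ({f | ∃ (i : Fin n) (j j' : Fin m), f = X (i, j) * X (i, j')} ∪
     {f | ∃ (i i' : Fin n) (j : Fin m), f = X (i, j) * X (i', j)})

section Aux

variable {n m : ℕ}

lemma Finsupp.degree_eq_sum' (d : (Fin n × Fin m) →₀ ℕ) :
    d.degree = d.sum fun _ e => e := rfl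

/-- The 0/1-point associated to a set of squares. -/
def eP (R : Finset (Fin n × Fin m)) : (Fin n × Fin m) → ℂ :=
  fun p => if p ∈ R then 1 else 0

lemma eP_mem {R : Finset (Fin n × Fin m)} (hR : IsRookPlacement R) :
    eP R ∈ rookLocus n m :=
  ⟨R, hR, fun _ => rfl⟩

lemma prod_eP (R : Finset (Fin n × Fin m)) (α : (Fin n × Fin m) →₀ ℕ) :
    (∏ p ∈ α.support, eP R p ^ α p) = if α.support ⊆ R then 1 else 0 := by
  split_ifs with h
  · exact Finset.prod_eq_one fun p hp => by simp [eP, h hp]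
  · obtain ⟨p, hp, hpR⟩ := Finset.not_subset.mp h
    exact Finset.prod_eq_zero hp
      (by simp [eP, hpR, zero_pow (Finsupp.mem_support_iff.mp hp)])

/-- The sum of the coefficients of all monomials of `f` with support exactly `S`. -/
noncomputable def Af (f : MvPolynomial (Fin n × Fin m) ℂ)
    (S : Finset (Fin n × Fin m)) : ℂ :=
  ∑ α ∈ f.support.filter (fun α => α.support = S), coeff α f

lemma eval_eP (f : MvPolynomial (Fin n × Fin m) ℂ) (R : Finset (Fin n × Fin m)) :
    eval (eP R) f = ∑ S ∈ R.powerset, Af f S := by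
  classical
  rw [eval_eq]
  have h1 : ∀ d ∈ f.support,
      f.coeff d * ∏ p ∈ d.support, eP R p ^ d p
        = if d.support ⊆ R then f.coeff d else 0 := by
    intro d _
    rw [prod_eP]
    split_ifs <;> simp
  rw [Finset.sum_congr rfl h1, ← Finset.sum_filter]
  have hmaps : ∀ d ∈ f.support.filter (fun d => d.support ⊆ R),
      d.support ∈ R.powerset := by
    intro d hd
    exact Finset.mem_powerset.mpr (Finset.mem_filter.mp hd).2
  rw [← Finset.sum_fiberwise_of_maps_to hmaps (fun d => f.coeff d)]
  apply Finset.sum_congr rfl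
  intro S hS
  unfold Af
  apply Finset.sum_congr ?_ (fun _ _ => rfl)
  ext α
  simp only [Finset.mem_filter]
  constructor
  · rintro ⟨⟨hα, _⟩, h3⟩; exact ⟨hα, h3⟩
  · rintro ⟨hα, h3⟩; exact ⟨⟨hα, h3 ▸ Finset.mem_powerset.mp hS⟩, h3⟩

lemma Af_eq_zero {f : MvPolynomial (Fin n × Fin m) ℂ}
    (hf : f ∈ MvPolynomial.vanishingIdeal ℂ (rookLocus n m)) :
    ∀ S : Finset (Fin n × Fin m), IsRookPlacement S → Af f S = 0 := by
  intro S
  induction S using Finset.strongInduction with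
  | H S ih =>
    intro hS
    have h0 : ∑ T ∈ S.powerset, Af f T = 0 := by
      rw [← eval_eP]
      exact hf _ (eP_mem hS)
    have h1 : Af f S = (∑ T ∈ S.powerset, Af f T)
        - ∑ T ∈ S.powerset.erase S, Af f T := by
      rw [Finset.sum_erase_eq_sub (Finset.mem_powerset_self S)]
      ring
    rw [h1, h0, zero_sub, neg_eq_zero]
    apply Finset.sum_eq_zero
    intro T hT
    obtain ⟨hne, hTp⟩ := Finset.mem_erase.mp hT
    have hsub : T ⊆ S := Finset.mem_powerset.mp hTp
    exact ih T (lt_of_le_of_ne hsub hne)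
      (fun p hp q hq hpq => hS p (hsub hp) q (hsub hq) hpq)

lemma monomial_mem_idealInm {d : (Fin n × Fin m) →₀ ℕ} (c : ℂ)
    {p q : Fin n × Fin m} (hpq : p.1 = q.1 ∨ p.2 = q.2)
    (hle : Finsupp.single p 1 + Finsupp.single q 1 ≤ d) :
    monomial d c ∈ idealInm n m := by
  have hgen : (X p * X q : MvPolynomial (Fin n × Fin m) ℂ) ∈ idealInm n m := by
    apply Ideal.subset_span
    obtain ⟨p1, p2⟩ := p
    obtain ⟨q1, q2⟩ := q
    rcases hpq with h | h
    · exact Or.inl ⟨p1, p2, q2, by dsimp only at h; rw [h]⟩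
    · exact Or.inr ⟨p1, q1, p2, by dsimp only at h; rw [h]⟩
  have heq : monomial d c
      = (X p * X q) * monomial (d - (Finsupp.single p 1 + Finsupp.single q 1)) c := by
    rw [X, X, monomial_mul, monomial_mul, one_mul, one_mul,
      add_tsub_cancel_of_le hle]
  rw [heq]
  exact Ideal.mul_mem_right _ _ hgen

lemma single_add_single_le {d : (Fin n × Fin m) →₀ ℕ} {p q : Fin n × Fin m}
    (hpq : p ≠ q) (hp : p ∈ d.support) (hq : q ∈ d.support) :
    Finsupp.single p 1 + Finsupp.single q 1 ≤ d := by
  intro s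
  rw [Finsupp.add_apply, Finsupp.single_apply, Finsupp.single_apply]
  by_cases hsp : p = s
  · subst hsp
    rw [if_pos rfl, if_neg (fun h' => hpq h'.symm)]
    simpa using Nat.one_le_iff_ne_zero.mpr (Finsupp.mem_support_iff.mp hp)
  · rw [if_neg hsp]
    by_cases hsq : q = s
    · subst hsq
      rw [if_pos rfl]
      simpa using Nat.one_le_iff_ne_zero.mpr (Finsupp.mem_support_iff.mp hq)
    · rw [if_neg hsq]; simp

/-- The top homogeneous component of an element of the vanishing ideal lies
in `I_{n,m}`. -/
lemma top_mem_idealInm {f : MvPolynomial (Fin n × Fin m) ℂ}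
    (hfI : f ∈ MvPolynomial.vanishingIdeal ℂ (rookLocus n m)) :
    homogeneousComponent f.totalDegree f ∈ idealInm n m := by
  classical
  rw [← support_sum_monomial_coeff (homogeneousComponent f.totalDegree f)]
  apply Ideal.sum_mem
  intro d hd
  by_cases hbad : ∃ p q : Fin n × Fin m, (p.1 = q.1 ∨ p.2 = q.2) ∧
      Finsupp.single p 1 + Finsupp.single q 1 ≤ d
  · obtain ⟨p, q, h1, h2⟩ := hbad
    exact monomial_mem_idealInm _ h1 h2
  · push_neg at hbad
    exfalso
    have hdne := MvPolynomial.mem_support_iff.mp hd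
    rw [coeff_homogeneousComponent] at hdne
    have hdeg : d.degree = f.totalDegree := by
      by_contra h; exact hdne (if_neg h)
    rw [if_pos hdeg] at hdne
    -- `d` is squarefree
    have hsf : ∀ p, d p ≤ 1 := by
      intro p
      by_contra h
      push_neg at h
      apply hbad p p (Or.inl rfl)
      rw [← Finsupp.single_add]
      exact Finsupp.single_le_iff.mpr h
    -- the support of `d` is a rook placement
    have hrook : IsRookPlacement d.support := by
      intro p hp q hq hpq
      constructor
      · intro h
        exact hbad p q (Or.inl h) (single_add_single_le hpq hp hq)
      · intro h
        exact hbad p q (Or.inr h) (single_add_single_le hpq hp hq)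
    -- `d p = 1` on the support
    have hone : ∀ p ∈ d.support, d p = 1 := fun p hp =>
      le_antisymm (hsf p) (Nat.one_le_iff_ne_zero.mpr (Finsupp.mem_support_iff.mp hp))
    have hcard : d.degree = d.support.card := by
      rw [Finsupp.degree, Finset.card_eq_sum_ones]
      exact Finset.sum_congr rfl hone
    -- the only monomial of `f` with support `d.support` is `d` itself
    have hfilter : f.support.filter (fun α => α.support = d.support) = {d} := by
      apply Finset.eq_singleton_iff_unique_mem.mpr
      refine ⟨Finset.mem_filter.mpr ⟨MvPolynomial.mem_support_iff.mpr hdne, rfl⟩, ?_⟩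
      intro α hα
      obtain ⟨hαf, hαs⟩ := Finset.mem_filter.mp hα
      have hle : ∀ p ∈ d.support, 1 ≤ α p := fun p hp =>
        Nat.one_le_iff_ne_zero.mpr (Finsupp.mem_support_iff.mp (hαs ▸ hp))
      have hαdeg : α.degree ≤ f.totalDegree := by
        rw [Finsupp.degree_eq_sum']
        exact le_totalDegree hαf
      have hαone : ∀ p ∈ d.support, α p = 1 := by
        by_contra hcontra
        push_neg at hcontra
        obtain ⟨p, hp, hpne⟩ := hcontra
        have hlt : d.support.card < α.degree := by
          rw [Finset.card_eq_sum_ones, Finsupp.degree, ← hαs]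
          refine Finset.sum_lt_sum (fun i hi => hle i (hαs ▸ hi)) ?_
          exact ⟨p, hαs ▸ hp, lt_of_le_of_ne (hle p hp) (Ne.symm hpne)⟩
        omega
      apply Finsupp.ext
      intro p
      by_cases hp : p ∈ d.support
      · rw [hαone p hp, hone p hp]
      · have h1 : α p = 0 := Finsupp.notMem_support_iff.mp (by rwa [hαs])
        have h2 : d p = 0 := Finsupp.notMem_support_iff.mp hp
        rw [h1, h2]
    have hAf : Af f d.support = coeff d f := by
      rw [Af, hfilter, Finset.sum_singleton]
    rw [Af_eq_zero hfI d.support hrook] at hAf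
    exact hdne hAf.symm

/-- Generic membership of `X p * X q` (with `p ≠ q` forbidden from common rook
placements) in the generating set of the graded ideal. -/
lemma X_mul_X_mem_gr {p q : Fin n × Fin m} (hpq : p ≠ q)
    (hz : ∀ R : Finset (Fin n × Fin m), IsRookPlacement R → p ∈ R → q ∈ R → False) :
    (X p * X q : MvPolynomial (Fin n × Fin m) ℂ) ∈
      {g | ∃ f ∈ MvPolynomial.vanishingIdeal ℂ (rookLocus n m), f ≠ 0 ∧
        g = homogeneousComponent f.totalDegree f} := by
  refine ⟨X p * X q, ?_, ?_, ?_⟩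
  · intro z hzmem
    obtain ⟨R, hR, hzf⟩ := hzmem
    rw [map_mul, aeval_X, aeval_X, hzf, hzf]
    split_ifs with h1 h2
    · exact absurd (hz R hR h1 h2) not_false
    · exact mul_zero _
    · exact zero_mul _
    · exact zero_mul _
  · intro h0
    have h1 : eval (fun _ => (1 : ℂ)) (X p * X q : MvPolynomial (Fin n × Fin m) ℂ) = 1 := by
      simp
    rw [h0] at h1
    simp at h1
  · have hhom : (X p * X q : MvPolynomial (Fin n × Fin m) ℂ).IsHomogeneous 2 :=
      (isHomogeneous_X ℂ p).mul (isHomogeneous_X ℂ q)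
    have hne : (X p * X q : MvPolynomial (Fin n × Fin m) ℂ) ≠ 0 := by
      intro h0
      have h1 : eval (fun _ => (1 : ℂ)) (X p * X q : MvPolynomial (Fin n × Fin m) ℂ) = 1 := by
        simp
      rw [h0] at h1
      simp at h1
    rw [hhom.totalDegree hne,
      homogeneousComponent_of_mem ((mem_homogeneousSubmodule _ _).mpr hhom),
      if_pos rfl]

/-- Membership of a square `X p * X p` in the generating set of the graded
ideal, via `X p ^ 2 - X p`. -/
lemma X_sq_mem_gr (p : Fin n × Fin m) :
    (X p * X p : MvPolynomial (Fin n × Fin m) ℂ) ∈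
      {g | ∃ f ∈ MvPolynomial.vanishingIdeal ℂ (rookLocus n m), f ≠ 0 ∧
        g = homogeneousComponent f.totalDegree f} := by
  classical
  refine ⟨X p ^ 2 - X p, ?_, ?_, ?_⟩
  · intro z hzmem
    obtain ⟨R, hR, hzf⟩ := hzmem
    rw [map_sub, map_pow, aeval_X, hzf]
    split_ifs <;> norm_num
  · have hcoeff : coeff (Finsupp.single p 2) ((X p ^ 2 - X p : MvPolynomial (Fin n × Fin m) ℂ)) = 1 := by
      have hsne : (Finsupp.single p 1 : (Fin n × Fin m) →₀ ℕ) ≠ Finsupp.single p 2 := by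
        intro h
        have h2 := DFunLike.congr_fun h p
        simp [Finsupp.single_eq_same] at h2
      rw [coeff_sub, X_pow_eq_monomial, coeff_monomial, if_pos rfl, ← pow_one (X p),
        X_pow_eq_monomial, coeff_monomial, if_neg hsne, sub_zero]
    intro h0
    rw [h0, coeff_zero] at hcoeff
    exact one_ne_zero hcoeff.symm
  · have hcoeff : coeff (Finsupp.single p 2) ((X p ^ 2 - X p : MvPolynomial (Fin n × Fin m) ℂ)) = 1 := by
      have hsne : (Finsupp.single p 1 : (Fin n × Fin m) →₀ ℕ) ≠ Finsupp.single p 2 := by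
        intro h
        have h2 := DFunLike.congr_fun h p
        simp [Finsupp.single_eq_same] at h2
      rw [coeff_sub, X_pow_eq_monomial, coeff_monomial, if_pos rfl, ← pow_one (X p),
        X_pow_eq_monomial, coeff_monomial, if_neg hsne, sub_zero]
    have hne : (X p ^ 2 - X p : MvPolynomial (Fin n × Fin m) ℂ) ≠ 0 := by
      intro h0
      rw [h0, coeff_zero] at hcoeff
      exact one_ne_zero hcoeff.symm
    have htd : (X p ^ 2 - X p : MvPolynomial (Fin n × Fin m) ℂ).totalDegree = 2 := by
      apply le_antisymm
      · calc (X p ^ 2 - X p : MvPolynomial (Fin n × Fin m) ℂ).totalDegree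
            = (X p ^ 2 + (- X p) : MvPolynomial (Fin n × Fin m) ℂ).totalDegree := by
              rw [sub_eq_add_neg]
          _ ≤ max (X p ^ 2 : MvPolynomial (Fin n × Fin m) ℂ).totalDegree
              (- X p : MvPolynomial (Fin n × Fin m) ℂ).totalDegree := totalDegree_add _ _
          _ ≤ 2 := by
              rw [totalDegree_neg, totalDegree_X, totalDegree_X_pow]
              omega
      · have hmem : Finsupp.single p 2 ∈
            (X p ^ 2 - X p : MvPolynomial (Fin n × Fin m) ℂ).support := by
          rw [MvPolynomial.mem_support_iff, hcoeff]
          exact one_ne_zero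
        have := le_totalDegree hmem
        rwa [Finsupp.sum_single_index rfl] at this
    rw [htd]
    have h2 : homogeneousComponent 2 ((X p ^ 2 - X p : MvPolynomial (Fin n × Fin m) ℂ))
        = X p ^ 2 := by
      rw [map_sub]
      have hhom : (X p ^ 2 : MvPolynomial (Fin n × Fin m) ℂ).IsHomogeneous 2 := by
        have := (isHomogeneous_X ℂ p).pow 2
        simpa using this
      rw [homogeneousComponent_of_mem ((mem_homogeneousSubmodule _ _).mpr hhom),
        if_pos rfl,
        homogeneousComponent_eq_zero _ _ (by rw [totalDegree_X]; omega),
        sub_zero]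
    rw [h2, pow_two]

end Aux

/-- `gr I(Z_{n,m}) = I_{n,m}`, where `I(Z_{n,m})` is the vanishing
ideal of the rook-placement matrix locus. -/
theorem grVanishing_eq_idealInm (n m : ℕ) :
    grIdeal (MvPolynomial.vanishingIdeal ℂ (rookLocus n m)) = idealInm n m := by
  classical
  apply le_antisymm
  · rw [grIdeal, Ideal.span_le]
    rintro g ⟨f, hfI, hf0, rfl⟩
    exact top_mem_idealInm hfI
  · rw [idealInm, Ideal.span_le]
    rintro g (⟨i, j, j', rfl⟩ | ⟨i, i', j, rfl⟩)
    · by_cases h : j = j'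
      · subst h
        exact Ideal.subset_span (X_sq_mem_gr (i, j))
      · apply Ideal.subset_span
        apply X_mul_X_mem_gr (by simp [h])
        intro R hR h1 h2
        exact (hR _ h1 _ h2 (by simp [h])).1 rfl
    · by_cases h : i = i'
      · subst h
        exact Ideal.subset_span (X_sq_mem_gr (i, j))
      · apply Ideal.subset_span
        apply X_mul_X_mem_gr (by simp [h])
        intro R hR h1 h2
        exact (hR _ h1 _ h2 (by simp [h])).2 rfl
end

section
/- If r ≤ min(n,m), m−r < t ≤ m, and b_1,...,b_t ∈ [m] are distinct, then the sum over all ordered tuples of distinct indices i_1,...,i_t ∈ [n] of the product x_{i_1,b_1}···x_{i_t,b_t} lies in the ideal J_{n,m,r}. -/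
open MvPolynomial

/-- The ideal `J_{n,m,r}` generated by (a) all products of two variables in the
same row and (b) all products of `m−r+1` distinct column sums. -/
noncomputable def idealJ (n m r : ℕ) : Ideal (MvPolynomial (Fin n × Fin m) ℂ) :=
  Ideal.span
    ({f | ∃ (i : Fin n) (j j' : Fin m), f = X (i, j) * X (i, j')} ∪
     {f | ∃ js : Fin (m - r + 1) → Fin m, Function.Injective js ∧
            f = ∏ k, (∑ i, X (i, js k))})

/-- if `r ≤ min(n,m)`, `m − r < t ≤ m` and `b_1, …, b_t ∈ [m]` are
distinct, then `Σ_{i_1,…,i_t distinct in [n]} x_{i_1,b_1} ⋯ x_{i_t,b_t}`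
lies in `J_{n,m,r}`. -/
theorem sum_distinct_products_mem_idealJ (n m r t : ℕ)
    (hr : r ≤ min n m) (ht1 : m - r < t) (ht2 : t ≤ m)
    (b : Fin t → Fin m) (hb : Function.Injective b) :
    (∑ i ∈ Finset.univ.filter
        (fun i : Fin t → Fin n => Function.Injective i),
      ∏ k, X (i k, b k)) ∈ idealJ n m r := by
  classical
  have htm : m - r + 1 ≤ t := by omega
  -- The full product of column sums lies in the ideal.
  have htot : (∏ k : Fin t, ∑ i : Fin n, X (i, b k)) ∈ idealJ n m r := by
    have hgen : (∏ j : Fin (m - r + 1), ∑ i : Fin n, X (i, b (Fin.castLE htm j)))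
        ∈ idealJ n m r := by
      apply Ideal.subset_span
      exact Or.inr ⟨b ∘ Fin.castLE htm, hb.comp (Fin.castLE_injective htm), rfl⟩
    have hsplit : (∏ k : Fin t, ∑ i : Fin n, X (i, b k)) =
        (∏ j : Fin (m - r + 1), ∑ i : Fin n,
          (X (i, b (Fin.castLE htm j)) : MvPolynomial (Fin n × Fin m) ℂ)) *
        ∏ k ∈ (Finset.univ.map (Fin.castLEEmb htm))ᶜ, ∑ i : Fin n, X (i, b k) := by
      rw [← Finset.prod_mul_prod_compl (Finset.univ.map (Fin.castLEEmb htm))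
        (fun k => ∑ i : Fin n, X (i, b k)), Finset.prod_map]
      rfl
    rw [hsplit]
    exact Ideal.mul_mem_right _ _ hgen
  -- Each non-injective term lies in the ideal.
  have hnon : ∀ i : Fin t → Fin n, ¬ Function.Injective i →
      (∏ k, X (i k, b k)) ∈ idealJ n m r := by
    intro i hi
    simp only [Function.Injective, not_forall] at hi
    obtain ⟨k, k', hik, hkk'⟩ := hi
    have hsplit : (∏ l, X (i l, b l)) =
        ((X (i k, b k) : MvPolynomial (Fin n × Fin m) ℂ) * X (i k', b k')) *
          ∏ l ∈ ({k, k'} : Finset (Fin t))ᶜ, X (i l, b l) := by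
      rw [← Finset.prod_pair hkk' (f := fun l => (X (i l, b l) : MvPolynomial (Fin n × Fin m) ℂ)),
        Finset.prod_mul_prod_compl ({k, k'} : Finset (Fin t))]
    rw [hsplit]
    apply Ideal.mul_mem_right
    apply Ideal.subset_span
    exact Or.inl ⟨i k, b k, b k', by rw [hik]⟩
  -- Expansion of the full product.
  have hexpand : (∏ k : Fin t, ∑ i : Fin n, X (i, b k)) =
      ∑ i : Fin t → Fin n, ∏ k, (X (i k, b k) : MvPolynomial (Fin n × Fin m) ℂ) := by
    rw [Finset.prod_univ_sum]
    simp [Fintype.piFinset_univ]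
  have hsumsplit := Finset.sum_filter_add_sum_filter_not Finset.univ
    (fun i : Fin t → Fin n => Function.Injective i)
    (fun i => ∏ k, (X (i k, b k) : MvPolynomial (Fin n × Fin m) ℂ))
  have hnonmem : (∑ i ∈ Finset.univ.filter
      (fun i : Fin t → Fin n => ¬ Function.Injective i),
      ∏ k, X (i k, b k)) ∈ idealJ n m r :=
    Ideal.sum_mem _ (fun i hi => hnon i (Finset.mem_filter.mp hi).2)
  have key : (∑ i ∈ Finset.univ.filter
        (fun i : Fin t → Fin n => Function.Injective i),
      ∏ k, X (i k, b k)) =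
      (∏ k : Fin t, ∑ i : Fin n, (X (i, b k) : MvPolynomial (Fin n × Fin m) ℂ)) -
      (∑ i ∈ Finset.univ.filter
        (fun i : Fin t → Fin n => ¬ Function.Injective i),
        ∏ k, X (i k, b k)) := by
    rw [hexpand, ← hsumsplit]
    ring
  rw [key]
  exact Ideal.sub_mem _ htot hnonmem
end

section
/- Let r ≤ min(n,m) and let R be a rook placement on the n × m board of size at least r. Then the extended shadow set ES(R), i.e., the shadow set of the extended permutation EX(R) ∈ S_{n+m−r}, is contained in the upper-right n × m sub-board; in particular ES(R) is again a rook placement on the n × m board. -/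
/-- The length of the longest increasing subsequence of `w ∈ S_N` (viewed via
its diagram `{(i, w(i))}`). -/
noncomputable def lis {N : ℕ} (w : Equiv.Perm (Fin N)) : ℕ :=
  sSup {k | ∃ s : Finset (Fin N), s.card = k ∧
    ∀ a ∈ s, ∀ b ∈ s, a < b → w a < w b}

/-- The index of the Viennot shadow line through the point `(i, w(i))`:
the length of the longest increasing subsequence of `w` ending at position `i`.
(The first shadow line consists of the left-to-right minima, i.e. the points of
level 1; removing them, the second shadow line consists of the left-to-right
minima of the rest, i.e. the points of level 2; and so on.) -/
noncomputable def shadowLevel {N : ℕ} (w : Equiv.Perm (Fin N)) (i : Fin N) : ℕ :=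
  sSup {k | ∃ s : Finset (Fin N), s.card = k ∧ i ∈ s ∧ (∀ a ∈ s, a ≤ i) ∧
    ∀ a ∈ s, ∀ b ∈ s, a < b → w a < w b}

/-- The Viennot shadow set `S(w)`: the set of northeast corners of the shadow
lines of `w`.  A northeast corner arises from each pair of consecutive points
`(i, w(i))`, `(i', w(i'))` on a common shadow line, and is the point
`(i', w(i))`. -/
noncomputable def shadowSet {N : ℕ} (w : Equiv.Perm (Fin N)) :
    Set (Fin N × Fin N) :=
  {q | ∃ i i' : Fin N, i < i' ∧ shadowLevel w i = shadowLevel w i' ∧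
    (∀ i'', i < i'' → i'' < i' → shadowLevel w i'' ≠ shadowLevel w i) ∧
    q = (i', w i)}

/-- The index, in the extended `(n+m−r) × (n+m−r)` board, of the `i`-th column
of the original board (the `m−r` new columns are added on the left). -/
def colIdx (n m r : ℕ) (hr : r ≤ m) (i : Fin n) : Fin (n + m - r) :=
  ⟨m - r + i.val, by have := i.isLt; omega⟩

/-- The index, in the extended `(n+m−r) × (n+m−r)` board, of the `j`-th row of
the original board (the `n−r` new rows are added at the bottom). -/
def rowIdx (n m r : ℕ) (hr : r ≤ n) (j : Fin m) : Fin (n + m - r) :=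
  ⟨n - r + j.val, by have := j.isLt; omega⟩

/-- `w ∈ S_{n+m−r}` is the extended permutation `EX(R)` of the rook placement
`R`: its diagram restricted to the original board is exactly `R`, the values on
the `m−r` new columns form an increasing pattern, and the positions of the
values in the `n−r` new rows form an increasing pattern. -/
def IsExtension {n m r : ℕ} (hr1 : r ≤ n) (hr2 : r ≤ m)
    (R : Finset (Fin n × Fin m)) (w : Equiv.Perm (Fin (n + m - r))) : Prop :=
  (∀ (i : Fin n) (j : Fin m),
      (i, j) ∈ R ↔ w (colIdx n m r hr2 i) = rowIdx n m r hr1 j) ∧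
  (∀ a b : Fin (n + m - r), a.val < m - r → b.val < m - r → a < b → w a < w b) ∧
  (∀ a b : Fin (n + m - r), (w a).val < n - r → (w b).val < n - r → a < b →
      w a < w b)

lemma shadowLevel_bddAbove {N : ℕ} (w : Equiv.Perm (Fin N)) (i : Fin N) :
    BddAbove {k | ∃ s : Finset (Fin N), s.card = k ∧ i ∈ s ∧ (∀ a ∈ s, a ≤ i) ∧
      ∀ a ∈ s, ∀ b ∈ s, a < b → w a < w b} := by
  refine ⟨N, fun k hk => ?_⟩
  obtain ⟨s, hs, -⟩ := hk
  calc k = s.card := hs.symm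
    _ ≤ Finset.univ.card := Finset.card_le_univ s
    _ = N := by simp

lemma shadowLevel_mem {N : ℕ} (w : Equiv.Perm (Fin N)) (i : Fin N) :
    shadowLevel w i ∈ {k | ∃ s : Finset (Fin N), s.card = k ∧ i ∈ s ∧
      (∀ a ∈ s, a ≤ i) ∧ ∀ a ∈ s, ∀ b ∈ s, a < b → w a < w b} := by
  apply Nat.sSup_mem
  · exact ⟨1, {i}, by simp, by simp, by simp, by simp⟩
  · exact shadowLevel_bddAbove w i

lemma shadowLevel_lt {N : ℕ} (w : Equiv.Perm (Fin N)) {a b : Fin N}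
    (hab : a < b) (hw : w a < w b) : shadowLevel w a < shadowLevel w b := by
  obtain ⟨s, hcard, hmem, hle, hinc⟩ := shadowLevel_mem w a
  have hbs : b ∉ s := fun hb => absurd (hle b hb) (not_le.mpr hab)
  have : shadowLevel w a + 1 ∈ {k | ∃ s : Finset (Fin N), s.card = k ∧ b ∈ s ∧
      (∀ x ∈ s, x ≤ b) ∧ ∀ x ∈ s, ∀ y ∈ s, x < y → w x < w y} := by
    refine ⟨insert b s, by rw [Finset.card_insert_of_notMem hbs, hcard],
      Finset.mem_insert_self _ _, ?_, ?_⟩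
    · intro x hx
      rcases Finset.mem_insert.mp hx with h | h
      · exact le_of_eq h
      · exact (hle x h).trans hab.le
    · intro x hx y hy hxy
      rcases Finset.mem_insert.mp hx with hx' | hx'
      · subst hx'
        rcases Finset.mem_insert.mp hy with hy' | hy'
        · subst hy'; exact absurd hxy (lt_irrefl _)
        · exact absurd (hxy.trans_le ((hle y hy').trans hab.le)) (lt_irrefl _)
      · rcases Finset.mem_insert.mp hy with hy' | hy'
        · subst hy'
          rcases lt_or_eq_of_le (hle x hx') with h | h
          · exact (hinc x hx' a hmem h).trans hw
          · exact h ▸ hw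
        · exact hinc x hx' y hy' hxy
  exact Nat.lt_of_succ_le (le_csSup (shadowLevel_bddAbove w b) this)

lemma shadowLevel_same_dec {N : ℕ} (w : Equiv.Perm (Fin N)) {a b : Fin N}
    (hab : a < b) (heq : shadowLevel w a = shadowLevel w b) : w b < w a := by
  rcases lt_trichotomy (w a) (w b) with h | h | h
  · exact absurd heq (shadowLevel_lt w hab h).ne
  · exact absurd (w.injective h) hab.ne
  · exact h

/-- for `r ≤ min(n,m)` and a rook placement `R` of size at least
`r` on the `n × m` board, the extended shadow set `ES(R)` — the Viennot shadow
set of the extended permutation `EX(R) ∈ S_{n+m−r}` — lies in the upper-right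
`n × m` sub-board, and is again a rook placement (no two of its points share a
row or a column). -/
theorem extendedShadow_in_board (n m r : ℕ) (hr1 : r ≤ n) (hr2 : r ≤ m)
    (R : Finset (Fin n × Fin m)) (hR : IsRookPlacement R) (hcard : r ≤ R.card)
    (w : Equiv.Perm (Fin (n + m - r))) (hw : IsExtension hr1 hr2 R w) :
    (∀ q ∈ shadowSet w, m - r ≤ q.1.val ∧ n - r ≤ q.2.val) ∧
    (∀ q ∈ shadowSet w, ∀ q' ∈ shadowSet w, q ≠ q' → q.1 ≠ q'.1 ∧ q.2 ≠ q'.2) := by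
  constructor
  · rintro q ⟨i, i', hlt, heq, hgap, rfl⟩
    have hdec := shadowLevel_same_dec w hlt heq
    constructor
    · by_contra hc
      push_neg at hc
      have hi : i.val < m - r := (Fin.lt_def.mp hlt).trans hc
      exact absurd (hw.2.1 i i' hi hc hlt) (not_lt.mpr hdec.le)
    · by_contra hc
      push_neg at hc
      have hi' : (w i').val < n - r := (Fin.lt_def.mp hdec).trans hc
      exact absurd (hw.2.2 i i' hc hi' hlt) (not_lt.mpr hdec.le)
  · rintro q ⟨i, i', hlt, heq, hgap, rfl⟩ q' ⟨j, j', hlt', heq', hgap', rfl⟩ hne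
    -- predecessor uniqueness: same corner column forces same predecessor
    have hpred : i' = j' → i = j := by
      intro h
      subst h
      by_contra hij
      rcases lt_or_gt_of_ne hij with hlt2 | hlt2
      · exact hgap j hlt2 hlt' (heq'.trans heq.symm)
      · exact hgap' i hlt2 hlt (heq.trans heq'.symm)
    -- successor uniqueness: same predecessor forces same corner column
    have hsucc : i = j → i' = j' := by
      intro h
      subst h
      by_contra hij
      rcases lt_or_gt_of_ne hij with hlt2 | hlt2
      · exact hgap' i' hlt hlt2 heq.symm
      · exact hgap j' hlt' hlt2 heq'.symm
    constructor
    · intro h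
      have hij := hpred h
      exact hne (by simp only [Prod.mk.injEq]; exact ⟨h, congrArg w hij⟩)
    · intro h
      have hij := w.injective h
      have := hsucc hij
      exact hne (by simp only [Prod.mk.injEq]; exact ⟨this, h⟩)
end

section
/- For r ≤ min(n,m), the ideal I_{n,m,r} is contained in the associated graded ideal gr I(UZ_{n,m,r}) of the vanishing ideal of the locus UZ_{n,m,r} of rook placement matrices of size at least r. -/
open MvPolynomial

/-- The locus `UZ_{n,m,r} ⊆ Mat_{n×m}(ℂ) ≅ ℂ^{n×m}` of 0/1 matrices with at most
one `1` in each row and column and at least `r` ones. -/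
def upperRookLocus (n m r : ℕ) : Set ((Fin n × Fin m) → ℂ) :=
  {z | ∃ R : Finset (Fin n × Fin m), IsRookPlacement R ∧ r ≤ R.card ∧
        ∀ p, z p = if p ∈ R then 1 else 0}

/-- The ideal `I_{n,m,r}`: generated by products of two variables in a common
row, products of two variables in a common column, products of `n−r+1` distinct
row sums, and products of `m−r+1` distinct column sums. -/
noncomputable def idealInmr (n m r : ℕ) : Ideal (MvPolynomial (Fin n × Fin m) ℂ) :=
  Ideal.span
    ({f | ∃ (i : Fin n) (j j' : Fin m), f = X (i, j) * X (i, j')} ∪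
     {f | ∃ (i i' : Fin n) (j : Fin m), f = X (i, j) * X (i', j)} ∪
     {f | ∃ is : Fin (n - r + 1) → Fin n, Function.Injective is ∧
            f = ∏ k, (∑ j, X (is k, j))} ∪
     {f | ∃ js : Fin (m - r + 1) → Fin m, Function.Injective js ∧
            f = ∏ k, (∑ i, X (i, js k))})

/-- Key lemma: if `g` is homogeneous of degree `d`, nonzero, `h` has smaller total degree
and `g + h` vanishes on `S`, then `g ∈ gr I(S)`. -/
lemma mem_grVanishing {σ : Type*} {S : Set (σ → ℂ)} {g h : MvPolynomial σ ℂ} {d : ℕ}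
    (hg : g.IsHomogeneous d) (hg0 : g ≠ 0) (hh : h.totalDegree < d)
    (hv : ∀ z ∈ S, eval z (g + h) = 0) :
    g ∈ grIdeal (MvPolynomial.vanishingIdeal ℂ S) := by
  have hgd : g.totalDegree = d := hg.totalDegree hg0
  have hcomp : homogeneousComponent d (g + h) = g := by
    rw [map_add, homogeneousComponent_of_mem ((mem_homogeneousSubmodule _ _).mpr hg),
      if_pos rfl, homogeneousComponent_eq_zero _ _ hh, add_zero]
  have hf0 : g + h ≠ 0 := fun e => hg0 (by rw [← hcomp, e, map_zero])
  have htd : (g + h).totalDegree = d := by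
    apply le_antisymm
    · exact (totalDegree_add _ _).trans (max_le hgd.le hh.le)
    · by_contra hlt
      push_neg at hlt
      exact hg0 (by rw [← hcomp, homogeneousComponent_eq_zero _ _ hlt])
  exact Ideal.subset_span ⟨g + h, hv, hf0, by rw [htd, hcomp]⟩

lemma rowSum_eq_one {n m : ℕ} {R : Finset (Fin n × Fin m)} (hR : IsRookPlacement R)
    {z : (Fin n × Fin m) → ℂ} (hz : ∀ p, z p = if p ∈ R then 1 else 0)
    {p : Fin n × Fin m} (hp : p ∈ R) : (∑ j, z (p.1, j)) = 1 := by
  have key : ∀ j, z (p.1, j) = if j = p.2 then 1 else 0 := by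
    intro j
    rw [hz]
    by_cases hj : j = p.2
    · simp [hj, hp]
    · rw [if_neg hj, if_neg]
      intro hmem
      have hne : (p.1, j) ≠ p := by
        intro e; apply hj; rw [← e]
      exact (hR _ hmem _ hp hne).1 rfl
  simp [key]

lemma colSum_eq_one {n m : ℕ} {R : Finset (Fin n × Fin m)} (hR : IsRookPlacement R)
    {z : (Fin n × Fin m) → ℂ} (hz : ∀ p, z p = if p ∈ R then 1 else 0)
    {p : Fin n × Fin m} (hp : p ∈ R) : (∑ i, z (i, p.2)) = 1 := by
  have key : ∀ i, z (i, p.2) = if i = p.1 then 1 else 0 := by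
    intro i
    rw [hz]
    by_cases hi : i = p.1
    · simp [hi, hp]
    · rw [if_neg hi, if_neg]
      intro hmem
      have hne : (i, p.2) ≠ p := by
        intro e; apply hi; rw [← e]
      exact (hR _ hmem _ hp hne).2 rfl
  simp [key]

lemma exists_rook_hit {n r : ℕ} {α : Type*} [Fintype α] [DecidableEq α]
    (hcard : Fintype.card α = n) (hrn : r ≤ n)
    {B : Finset α} (hB : r ≤ B.card)
    (is : Fin (n - r + 1) → α) (his : Function.Injective is) :
    ∃ k, is k ∈ B := by
  classical
  set A : Finset α := Finset.univ.image is with hA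
  have hAcard : A.card = n - r + 1 := by
    rw [hA, Finset.card_image_of_injective _ his, Finset.card_univ, Fintype.card_fin]
  have hunion : (A ∪ B).card ≤ n := by
    calc (A ∪ B).card ≤ Fintype.card α := Finset.card_le_univ _
    _ = n := hcard
  have hinter : 0 < (A ∩ B).card := by
    have := Finset.card_union_add_card_inter A B
    omega
  obtain ⟨a, ha⟩ := Finset.card_pos.mp hinter
  rw [Finset.mem_inter] at ha
  obtain ⟨k, _, hk⟩ := Finset.mem_image.mp ha.1
  exact ⟨k, hk ▸ ha.2⟩

/-- Total degree bound for products of linear-minus-constant factors. -/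
lemma totalDegree_shifted_prod_lt {σ : Type*} {d : ℕ} (hd : 0 < d)
    (L : Fin d → MvPolynomial σ ℂ) (hL : ∀ k, (L k).totalDegree ≤ 1) :
    ((∏ k, (L k - 1)) - ∏ k, L k).totalDegree < d := by
  classical
  have hexp : (∏ k, (L k - 1)) = ∑ t : Finset (Fin d), (∏ k ∈ t, L k) * ∏ k ∈ tᶜ, (-1) := by
    have : ∀ k, L k - 1 = L k + (-1) := fun k => by ring
    simp_rw [this]
    exact Fintype.prod_add L (fun _ => -1)
  have huniv : ((∏ k ∈ (Finset.univ : Finset (Fin d)), L k) * ∏ k ∈ (Finset.univ : Finset (Fin d))ᶜ, ((-1 : MvPolynomial σ ℂ))) = ∏ k, L k := by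
    simp
  have hsum : (∏ k, (L k - 1)) - ∏ k, L k
      = ∑ t ∈ (Finset.univ : Finset (Finset (Fin d))).erase Finset.univ,
          (∏ k ∈ t, L k) * ∏ k ∈ tᶜ, (-1) := by
    rw [hexp, ← Finset.add_sum_erase _ _ (Finset.mem_univ (Finset.univ : Finset (Fin d))),
      huniv, add_sub_cancel_left]
  rw [hsum]
  refine lt_of_le_of_lt (totalDegree_finset_sum _ _) ?_
  rw [Finset.sup_lt_iff (by simpa using hd)]
  intro t ht
  have htne : t ≠ Finset.univ := (Finset.mem_erase.mp ht).1
  have htcard : t.card < d := by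
    have := Finset.card_lt_card (Finset.ssubset_univ_iff.mpr htne)
    simpa using this
  calc ((∏ k ∈ t, L k) * ∏ k ∈ tᶜ, (-1 : MvPolynomial σ ℂ)).totalDegree
      ≤ (∏ k ∈ t, L k).totalDegree + (∏ k ∈ tᶜ, (-1 : MvPolynomial σ ℂ)).totalDegree :=
        totalDegree_mul _ _
    _ ≤ (∑ k ∈ t, (L k).totalDegree) + (∏ k ∈ tᶜ, (-1 : MvPolynomial σ ℂ)).totalDegree := by
        exact add_le_add (totalDegree_finset_prod _ _) le_rfl
    _ ≤ t.card + 0 := by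
        apply add_le_add
        · calc (∑ k ∈ t, (L k).totalDegree) ≤ ∑ _k ∈ t, 1 :=
            Finset.sum_le_sum (fun k _ => hL k)
          _ = t.card := by simp
        · have : (∏ _k ∈ tᶜ, (-1 : MvPolynomial σ ℂ)) = (-1) ^ tᶜ.card := by
            simp [Finset.prod_const]
          rw [this]
          rcases Nat.even_or_odd tᶜ.card with he | ho
          · rw [he.neg_one_pow]; simp
          · rw [ho.neg_one_pow]; simp [totalDegree_neg]
    _ < d := by omega

/-- for `r ≤ min(n,m)`, `I_{n,m,r} ⊆ gr I(UZ_{n,m,r})`. -/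
theorem idealInmr_le_grVanishing (n m r : ℕ) (hr : r ≤ min n m) :
    idealInmr n m r ≤ grIdeal (MvPolynomial.vanishingIdeal ℂ (upperRookLocus n m r)) := by
  classical
  have hrn : r ≤ n := hr.trans (min_le_left _ _)
  have hrm : r ≤ m := hr.trans (min_le_right _ _)
  rw [idealInmr]
  apply Ideal.span_le.mpr
  rintro f ((((⟨i, j, j', rfl⟩ | ⟨i, i', j, rfl⟩) | ⟨is, his, rfl⟩) | ⟨js, hjs, rfl⟩))
  all_goals simp only [SetLike.mem_coe]
  · -- same row
    by_cases hjj : j = j'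
    · subst hjj
      refine mem_grVanishing (d := 2)
        ((isHomogeneous_X ℂ (i, j)).mul (isHomogeneous_X ℂ (i, j)))
        (mul_ne_zero (X_ne_zero _) (X_ne_zero _)) (h := -X (i, j)) ?_ ?_
      · rw [totalDegree_neg, totalDegree_X]; omega
      · rintro z ⟨R, hR, hcard, hz⟩
        simp only [map_add, map_mul, map_neg, eval_X, hz]
        by_cases hmem : (i, j) ∈ R <;> simp [hmem]
    · refine mem_grVanishing (d := 2)
        ((isHomogeneous_X ℂ (i, j)).mul (isHomogeneous_X ℂ (i, j')))
        (mul_ne_zero (X_ne_zero _) (X_ne_zero _)) (h := 0) ?_ ?_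
      · rw [totalDegree_zero]; omega
      · rintro z ⟨R, hR, hcard, hz⟩
        simp only [add_zero, map_mul, eval_X, hz]
        by_cases h1 : (i, j) ∈ R
        · by_cases h2 : (i, j') ∈ R
          · exfalso
            exact (hR _ h1 _ h2 (by simp [Prod.ext_iff, hjj])).1 rfl
          · simp [h2]
        · simp [h1]
  · -- same column
    by_cases hii : i = i'
    · subst hii
      refine mem_grVanishing (d := 2)
        ((isHomogeneous_X ℂ (i, j)).mul (isHomogeneous_X ℂ (i, j)))
        (mul_ne_zero (X_ne_zero _) (X_ne_zero _)) (h := -X (i, j)) ?_ ?_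
      · rw [totalDegree_neg, totalDegree_X]; omega
      · rintro z ⟨R, hR, hcard, hz⟩
        simp only [map_add, map_mul, map_neg, eval_X, hz]
        by_cases hmem : (i, j) ∈ R <;> simp [hmem]
    · refine mem_grVanishing (d := 2)
        ((isHomogeneous_X ℂ (i, j)).mul (isHomogeneous_X ℂ (i', j)))
        (mul_ne_zero (X_ne_zero _) (X_ne_zero _)) (h := 0) ?_ ?_
      · rw [totalDegree_zero]; omega
      · rintro z ⟨R, hR, hcard, hz⟩
        simp only [add_zero, map_mul, eval_X, hz]
        by_cases h1 : (i, j) ∈ R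
        · by_cases h2 : (i', j) ∈ R
          · exfalso
            exact (hR _ h1 _ h2 (by simp [Prod.ext_iff, hii])).2 rfl
          · simp [h2]
        · simp [h1]
  · -- row sums
    rcases Nat.eq_zero_or_pos m with hm | hm
    · subst hm
      have : (∏ k, (∑ j, X (is k, j)) : MvPolynomial (Fin n × Fin 0) ℂ) = 0 := by
        have : ∀ k : Fin (n - r + 1), (∑ j : Fin 0, X (is k, j) : MvPolynomial (Fin n × Fin 0) ℂ) = 0 := by
          intro k; simp
        rw [Finset.prod_congr rfl (fun k _ => this k)]
        simp
      rw [this]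
      exact Ideal.zero_mem _
    · set L : Fin (n - r + 1) → MvPolynomial (Fin n × Fin m) ℂ := fun k => ∑ j, X (is k, j) with hL
      have hLdeg : ∀ k, (L k).totalDegree ≤ 1 := by
        intro k
        refine (totalDegree_finset_sum _ _).trans ?_
        apply Finset.sup_le
        intro j _
        rw [totalDegree_X]
      have hghom : (∏ k, L k).IsHomogeneous (n - r + 1) := by
        have := IsHomogeneous.prod Finset.univ L (fun _ => 1)
          (fun k _ => IsHomogeneous.sum Finset.univ _ 1 (fun j _ => isHomogeneous_X ℂ _))
        simpa using this
      have hg0 : (∏ k, L k) ≠ 0 := by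
        intro e
        have := congrArg (eval (fun _ => (1 : ℂ))) e
        rw [map_prod, map_zero] at this
        simp only [hL, map_sum, eval_X] at this
        rw [Finset.prod_congr rfl (fun k _ => by simp : ∀ k ∈ Finset.univ,
          (∑ _j : Fin m, (1 : ℂ)) = (m : ℂ))] at this
        rw [Finset.prod_const] at this
        exact pow_ne_zero _ (Nat.cast_ne_zero.mpr hm.ne') this
      refine mem_grVanishing hghom hg0
        (h := (∏ k, (L k - 1)) - ∏ k, L k) ?_ ?_
      · exact totalDegree_shifted_prod_lt (by omega) L hLdeg
      · rintro z ⟨R, hR, hcard, hz⟩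
        rw [show (∏ k, L k) + ((∏ k, (L k - 1)) - ∏ k, L k) = ∏ k, (L k - 1) by ring, map_prod]
        obtain ⟨k, p, hp, hpk⟩ : ∃ k, ∃ p ∈ R, p.1 = is k := by
          obtain ⟨k, hk⟩ := exists_rook_hit (Fintype.card_fin n) hrn
            (B := R.image Prod.fst)
            (hcard.trans (le_of_eq (Finset.card_image_of_injOn (fun p hp q hq hpq => by
              by_contra hne
              exact (hR _ hp _ hq hne).1 hpq)).symm)) is his
          obtain ⟨p, hpR, hpfst⟩ := Finset.mem_image.mp hk
          exact ⟨k, p, hpR, hpfst⟩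
        refine Finset.prod_eq_zero (Finset.mem_univ k) ?_
        have : eval z (L k) = 1 := by
          rw [hL]
          simp only [map_sum, eval_X]
          rw [← hpk]
          exact rowSum_eq_one hR hz hp
        rw [map_sub, this, map_one, sub_self]
  · -- column sums
    rcases Nat.eq_zero_or_pos n with hn | hn
    · subst hn
      have : (∏ k, (∑ i, X (i, js k)) : MvPolynomial (Fin 0 × Fin m) ℂ) = 0 := by
        have : ∀ k : Fin (m - r + 1), (∑ i : Fin 0, X (i, js k) : MvPolynomial (Fin 0 × Fin m) ℂ) = 0 := by
          intro k; simp
        rw [Finset.prod_congr rfl (fun k _ => this k)]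
        simp
      rw [this]
      exact Ideal.zero_mem _
    · set L : Fin (m - r + 1) → MvPolynomial (Fin n × Fin m) ℂ := fun k => ∑ i, X (i, js k) with hL
      have hLdeg : ∀ k, (L k).totalDegree ≤ 1 := by
        intro k
        refine (totalDegree_finset_sum _ _).trans ?_
        apply Finset.sup_le
        intro i _
        rw [totalDegree_X]
      have hghom : (∏ k, L k).IsHomogeneous (m - r + 1) := by
        have := IsHomogeneous.prod Finset.univ L (fun _ => 1)
          (fun k _ => IsHomogeneous.sum Finset.univ _ 1 (fun i _ => isHomogeneous_X ℂ _))
        simpa using this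
      have hg0 : (∏ k, L k) ≠ 0 := by
        intro e
        have := congrArg (eval (fun _ => (1 : ℂ))) e
        rw [map_prod, map_zero] at this
        simp only [hL, map_sum, eval_X] at this
        rw [Finset.prod_congr rfl (fun k _ => by simp : ∀ k ∈ Finset.univ,
          (∑ _i : Fin n, (1 : ℂ)) = (n : ℂ))] at this
        rw [Finset.prod_const] at this
        exact pow_ne_zero _ (Nat.cast_ne_zero.mpr hn.ne') this
      refine mem_grVanishing hghom hg0
        (h := (∏ k, (L k - 1)) - ∏ k, L k) ?_ ?_
      · exact totalDegree_shifted_prod_lt (by omega) L hLdeg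
      · rintro z ⟨R, hR, hcard, hz⟩
        rw [show (∏ k, L k) + ((∏ k, (L k - 1)) - ∏ k, L k) = ∏ k, (L k - 1) by ring, map_prod]
        obtain ⟨k, p, hp, hpk⟩ : ∃ k, ∃ p ∈ R, p.2 = js k := by
          obtain ⟨k, hk⟩ := exists_rook_hit (Fintype.card_fin m) hrm
            (B := R.image Prod.snd)
            (hcard.trans (le_of_eq (Finset.card_image_of_injOn (fun p hp q hq hpq => by
              by_contra hne
              exact (hR _ hp _ hq hne).2 hpq)).symm)) js hjs
          obtain ⟨p, hpR, hpsnd⟩ := Finset.mem_image.mp hk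
          exact ⟨k, p, hpR, hpsnd⟩
        refine Finset.prod_eq_zero (Finset.mem_univ k) ?_
        have : eval z (L k) = 1 := by
          rw [hL]
          simp only [map_sum, eval_X]
          rw [← hpk]
          exact colSum_eq_one hR hz hp
        rw [map_sub, this, map_one, sub_self]
end

section
/- Let d,a,b,p,q be nonnegative integers. Then in Λ ⊗ Λ: Σ_{μ⊢d} {s_μ·h_a}_{λ_1=p} ⊗ {s_μ·h_b}_{λ_1=q} = Σ_{μ⊢(d+a+b−max(p,q))} {s_μ·h_{max(p,q)−b}}_{λ_1=p} ⊗ {s_μ·h_{max(p,q)−a}}_{λ_1=q}. -/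
/-- An integer partition, recorded by its (finitely supported, weakly
decreasing) sequence of parts `λ_1 = part 0, λ_2 = part 1, …`. -/
structure Ptn where
  part : ℕ →₀ ℕ
  antitone' : ∀ i, part (i + 1) ≤ part i

/-- The size `|λ|` of a partition: the sum of its parts. -/
def Ptn.size (l : Ptn) : ℕ := l.part.sum fun _ v => v

/-- `IsPieri μ k λ` holds iff `λ` is obtained from `μ` by adding a horizontal
strip of size `k` (for `k : ℤ`; impossible when `k < 0`), i.e. iff `s_λ` occurs
in the Pieri expansion of `s_μ · h_k`.  By convention `h_k = 0` for `k < 0`. -/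
def IsPieri (m : Ptn) (k : ℤ) (l : Ptn) : Prop :=
  (l.size : ℤ) = m.size + k ∧ (∀ i, m.part i ≤ l.part i) ∧
    ∀ i, l.part (i + 1) ≤ m.part i

/- STATEMENT 15.  Since Schur functions `s_λ ⊗ s_μ` form a basis of `Λ ⊗ Λ`,
the identity
  `Σ_{μ⊢d} {s_μ·h_a}_{λ_1=p} ⊗ {s_μ·h_b}_{λ_1=q}
     = Σ_{μ⊢(d+a+b−max(p,q))} {s_μ·h_{max(p,q)−b}}_{λ_1=p} ⊗ {s_μ·h_{max(p,q)−a}}_{λ_1=q}`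
is equivalent to the coefficientwise statement below: for every pair of
partitions `(λ¹, λ²)`, the coefficient of `s_{λ¹} ⊗ s_{λ²}` on the two sides
agree.  By Pieri's rule this coefficient is the number of partitions `μ` of the
appropriate size such that `λ¹` and `λ²` arise from `μ` by adding the relevant
horizontal strips (subject to the truncations `λ¹_1 = p`, `λ²_1 = q`). -/

theorem Ptn.ext' {x y : Ptn} (h : x.part = y.part) : x = y := by
  cases x; cases y; simpa using h

/-- the involution -/
noncomputable def phi (l1 l2 m : Ptn)
    (hb : ∀ i, m.part i ≤ min (l1.part i) (l2.part i))
    (ha : ∀ i, max (l1.part (i+1)) (l2.part (i+1)) ≤ m.part i) : Ptn where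
  part := Finsupp.onFinset (l1.part.support ∪ l2.part.support)
    (fun i => min (l1.part i) (l2.part i) + max (l1.part (i+1)) (l2.part (i+1)) - m.part i)
    (by
      intro i hi
      have h1 := l1.antitone' i
      have h2 := l2.antitone' i
      have : l1.part i ≠ 0 ∨ l2.part i ≠ 0 := by
        omega
      simp only [Finset.mem_union, Finsupp.mem_support_iff]
      tauto)
  antitone' := by
    intro i
    have b1 := hb i; have b2 := hb (i+1); have a1 := ha i; have a2 := ha (i+1)
    have h1 := l1.antitone' (i+1); have h2 := l2.antitone' (i+1)
    simp only [Finsupp.onFinset_apply]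
    omega

lemma phi_part (l1 l2 m : Ptn) (hb ha) (i : ℕ) :
    (phi l1 l2 m hb ha).part i =
      min (l1.part i) (l2.part i) + max (l1.part (i+1)) (l2.part (i+1)) - m.part i := rfl

lemma phi_phi (l1 l2 m : Ptn) (hb ha hb' ha') :
    phi l1 l2 (phi l1 l2 m hb ha) hb' ha' = m := by
  apply Ptn.ext'
  ext i
  have b1 := hb i; have a1 := ha i
  simp only [phi_part, Finsupp.onFinset_apply]
  omega

lemma phi_size (l1 l2 m : Ptn) (hb ha) :
    (phi l1 l2 m hb ha).size + m.size + max (l1.part 0) (l2.part 0) =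
      l1.size + l2.size := by
  classical
  set N := ((l1.part.support ∪ l2.part.support) ∪ m.part.support).sup id + 1 with hN
  have hzero : ∀ i, N ≤ i → l1.part i = 0 ∧ l2.part i = 0 ∧ m.part i = 0 := by
    intro i hi
    refine ⟨?_, ?_, ?_⟩ <;> by_contra h <;>
    · have hmem : i ∈ (l1.part.support ∪ l2.part.support) ∪ m.part.support := by
        simp [Finsupp.mem_support_iff, h]
      have := Finset.le_sup (f := id) hmem
      simp only [id_eq] at this
      omega
  have hsum : ∀ l : Ptn, (∀ i, N ≤ i → l.part i = 0) →
      l.size = ∑ i ∈ Finset.range N, l.part i := by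
    intro l hl
    refine Finsupp.sum_of_support_subset _ ?_ _ (fun i _ => rfl)
    intro i hi
    simp only [Finsupp.mem_support_iff] at hi
    simp only [Finset.mem_range]
    by_contra h
    exact hi (hl i (by omega))
  have e1 : l1.size = ∑ i ∈ Finset.range N, l1.part i := hsum l1 (fun i hi => (hzero i hi).1)
  have e2 : l2.size = ∑ i ∈ Finset.range N, l2.part i := hsum l2 (fun i hi => (hzero i hi).2.1)
  have e3 : m.size = ∑ i ∈ Finset.range N, m.part i := hsum m (fun i hi => (hzero i hi).2.2)
  have e4 : (phi l1 l2 m hb ha).size = ∑ i ∈ Finset.range N, (phi l1 l2 m hb ha).part i := by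
    refine hsum _ (fun i hi => ?_)
    have h1 := (hzero i hi).1
    have h2 := (hzero i hi).2.1
    have h1' := (hzero (i+1) (by omega)).1
    have h2' := (hzero (i+1) (by omega)).2.1
    simp [phi_part, h1, h2, h1', h2']
  rw [e1, e2, e3, e4]
  -- termwise: phi.part i + m.part i = min_i + max_{i+1}
  have S1 : ∑ i ∈ Finset.range N, (phi l1 l2 m hb ha).part i
      + ∑ i ∈ Finset.range N, m.part i
      = ∑ i ∈ Finset.range N, min (l1.part i) (l2.part i)
      + ∑ i ∈ Finset.range N, max (l1.part (i+1)) (l2.part (i+1)) := by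
    rw [← Finset.sum_add_distrib, ← Finset.sum_add_distrib]
    refine Finset.sum_congr rfl (fun i _ => ?_)
    have b1 := hb i; have a1 := ha i
    simp only [phi_part]
    omega
  -- telescope
  have S2 : ∑ i ∈ Finset.range N, max (l1.part (i+1)) (l2.part (i+1))
      + max (l1.part 0) (l2.part 0)
      = ∑ i ∈ Finset.range N, max (l1.part i) (l2.part i) := by
    have h1 := (hzero N le_rfl).1
    have h2 := (hzero N le_rfl).2.1
    have hs := Finset.sum_range_succ' (fun i => max (l1.part i) (l2.part i)) N
    have hlast := Finset.sum_range_succ (fun i => max (l1.part i) (l2.part i)) N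
    simp only [h1, h2] at hlast hs
    omega
  have S3 : ∑ i ∈ Finset.range N, min (l1.part i) (l2.part i)
      + ∑ i ∈ Finset.range N, max (l1.part i) (l2.part i)
      = ∑ i ∈ Finset.range N, l1.part i + ∑ i ∈ Finset.range N, l2.part i := by
    rw [← Finset.sum_add_distrib, ← Finset.sum_add_distrib]
    exact Finset.sum_congr rfl (fun i _ => by omega)
  omega

lemma phi_le1 (l1 l2 m : Ptn) (hb ha) (i : ℕ) :
    (phi l1 l2 m hb ha).part i ≤ l1.part i := by
  have b1 := hb i; have a1 := ha i; simp only [phi_part]; omega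

lemma phi_le2 (l1 l2 m : Ptn) (hb ha) (i : ℕ) :
    (phi l1 l2 m hb ha).part i ≤ l2.part i := by
  have b1 := hb i; have a1 := ha i; simp only [phi_part]; omega

lemma phi_ge1 (l1 l2 m : Ptn) (hb ha) (i : ℕ) :
    l1.part (i+1) ≤ (phi l1 l2 m hb ha).part i := by
  have b1 := hb i; have a1 := ha i; simp only [phi_part]; omega

lemma phi_ge2 (l1 l2 m : Ptn) (hb ha) (i : ℕ) :
    l2.part (i+1) ≤ (phi l1 l2 m hb ha).part i := by
  have b1 := hb i; have a1 := ha i; simp only [phi_part]; omega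

lemma extract_hb {m l1 l2 : Ptn} {k1 k2 : ℤ} (h1 : IsPieri m k1 l1) (h2 : IsPieri m k2 l2) :
    ∀ i, m.part i ≤ min (l1.part i) (l2.part i) :=
  fun i => le_min (h1.2.1 i) (h2.2.1 i)

lemma extract_ha {m l1 l2 : Ptn} {k1 k2 : ℤ} (h1 : IsPieri m k1 l1) (h2 : IsPieri m k2 l2) :
    ∀ i, max (l1.part (i+1)) (l2.part (i+1)) ≤ m.part i :=
  fun i => max_le (h1.2.2 i) (h2.2.2 i)

lemma fwd (d a b p q : ℕ) (l1 l2 mu : Ptn) (hb ha)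
    (h : mu.size = d ∧ IsPieri mu a l1 ∧ l1.part 0 = p ∧ IsPieri mu b l2 ∧ l2.part 0 = q) :
    ((phi l1 l2 mu hb ha).size : ℤ) = d + a + b - max p q ∧
      IsPieri (phi l1 l2 mu hb ha) (max p q - b) l1 ∧ l1.part 0 = p ∧
      IsPieri (phi l1 l2 mu hb ha) (max p q - a) l2 ∧ l2.part 0 = q := by
  obtain ⟨hd, ⟨hs1, _, _⟩, hp, ⟨hs2, _, _⟩, hq⟩ := h
  have hsz := phi_size l1 l2 mu hb ha
  rw [hp, hq] at hsz
  refine ⟨by push_cast at hs1 hs2 ⊢; omega,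
    ⟨by push_cast at hs1 hs2 ⊢; omega, phi_le1 l1 l2 mu hb ha, phi_ge1 l1 l2 mu hb ha⟩, hp,
    ⟨by push_cast at hs1 hs2 ⊢; omega, phi_le2 l1 l2 mu hb ha, phi_ge2 l1 l2 mu hb ha⟩, hq⟩

lemma bwd (d a b p q : ℕ) (l1 l2 mu : Ptn) (hb ha)
    (h : (mu.size : ℤ) = d + a + b - max p q ∧
      IsPieri mu (max p q - b) l1 ∧ l1.part 0 = p ∧
      IsPieri mu (max p q - a) l2 ∧ l2.part 0 = q) :
    (phi l1 l2 mu hb ha).size = d ∧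
      IsPieri (phi l1 l2 mu hb ha) a l1 ∧ l1.part 0 = p ∧
      IsPieri (phi l1 l2 mu hb ha) b l2 ∧ l2.part 0 = q := by
  obtain ⟨hd, ⟨hs1, _, _⟩, hp, ⟨hs2, _, _⟩, hq⟩ := h
  have hsz := phi_size l1 l2 mu hb ha
  rw [hp, hq] at hsz
  refine ⟨by push_cast at hs1 hs2 hd ⊢; omega,
    ⟨by push_cast at hs1 hs2 hd ⊢; omega, phi_le1 l1 l2 mu hb ha, phi_ge1 l1 l2 mu hb ha⟩, hp,
    ⟨by push_cast at hs1 hs2 hd ⊢; omega, phi_le2 l1 l2 mu hb ha, phi_ge2 l1 l2 mu hb ha⟩, hq⟩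

theorem schur_interchange (d a b p q : ℕ) (l1 l2 : Ptn) :
    Nat.card {mu : Ptn // mu.size = d ∧
        IsPieri mu a l1 ∧ l1.part 0 = p ∧ IsPieri mu b l2 ∧ l2.part 0 = q} =
    Nat.card {mu : Ptn // (mu.size : ℤ) = d + a + b - max p q ∧
        IsPieri mu (max p q - b) l1 ∧ l1.part 0 = p ∧
        IsPieri mu (max p q - a) l2 ∧ l2.part 0 = q} := by
  refine Nat.card_congr
    { toFun := fun x => ⟨phi l1 l2 x.1 (extract_hb x.2.2.1 x.2.2.2.2.1)
        (extract_ha x.2.2.1 x.2.2.2.2.1), fwd d a b p q l1 l2 x.1 _ _ x.2⟩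
      invFun := fun x => ⟨phi l1 l2 x.1 (extract_hb x.2.2.1 x.2.2.2.2.1)
        (extract_ha x.2.2.1 x.2.2.2.2.1), bwd d a b p q l1 l2 x.1 _ _ x.2⟩
      left_inv := fun x => Subtype.ext (by
        apply phi_phi
        case hb => exact extract_hb x.2.2.1 x.2.2.2.2.1
        case ha => exact extract_ha x.2.2.1 x.2.2.2.2.1
        case hb' => exact fun i => le_min (phi_le1 _ _ _ _ _ i) (phi_le2 _ _ _ _ _ i)
        case ha' => exact fun i => max_le (phi_ge1 _ _ _ _ _ i) (phi_ge2 _ _ _ _ _ i))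
      right_inv := fun x => Subtype.ext (by
        apply phi_phi
        case hb => exact extract_hb x.2.2.1 x.2.2.2.2.1
        case ha => exact extract_ha x.2.2.1 x.2.2.2.2.1
        case hb' => exact fun i => le_min (phi_le1 _ _ _ _ _ i) (phi_le2 _ _ _ _ _ i)
        case ha' => exact fun i => max_le (phi_ge1 _ _ _ _ _ i) (phi_ge2 _ _ _ _ _ i)) }
end

section
/- Let d, a, b, p, q ≥ 0 and F = Σ_{μ⊢d} {s_μ·h_a}_{λ_1=p} ⊗ {s_μ·h_b}_{λ_1=q}. For partitions λ⁽¹⁾ ⊢ a+d with λ⁽¹⁾_1 = p and λ⁽²⁾ ⊢ b+d with λ⁽²⁾_1 = q satisfying min(λ⁽¹⁾_i, λ⁽²⁾_i) ≥ max(λ⁽¹⁾_{i+1}, λ⁽²⁾_{i+1}) for all i ≥ 1, the coefficient of s_{λ⁽¹⁾} ⊗ s_{λ⁽²⁾} in F equals the number of partitions μ ⊢ d with max(λ⁽¹⁾_{i+1}, λ⁽²⁾_{i+1}) ≤ μ_i ≤ min(λ⁽¹⁾_i, λ⁽²⁾_i) for all i; if any of the three conditions fails, the coefficient is 0. -/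
/- STATEMENT 16.  Coefficient of `s_{λ¹} ⊗ s_{λ²}` in
`F = Σ_{μ⊢d} {s_μ·h_a}_{λ_1=p} ⊗ {s_μ·h_b}_{λ_1=q}`.  By Pieri's rule this
coefficient equals the number of `μ ⊢ d` from which `λ¹` (resp. `λ²`) is
obtained by adding a horizontal strip of size `a` (resp. `b`), subject to the
truncations `λ¹_1 = p`, `λ²_1 = q`; the theorem identifies it with the
interlacing count when the three conditions hold, and with `0` otherwise. -/
theorem schur_coef (d a b p q : ℕ) (l1 l2 : Ptn)
    (hs1 : l1.size = a + d) (hs2 : l2.size = b + d) :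
    ((l1.part 0 = p ∧ l2.part 0 = q ∧
        (∀ i, max (l1.part (i + 1)) (l2.part (i + 1)) ≤
          min (l1.part i) (l2.part i))) →
      Nat.card {mu : Ptn // mu.size = d ∧
          IsPieri mu a l1 ∧ l1.part 0 = p ∧ IsPieri mu b l2 ∧ l2.part 0 = q} =
      Nat.card {mu : Ptn // mu.size = d ∧
          ∀ i, max (l1.part (i + 1)) (l2.part (i + 1)) ≤ mu.part i ∧
            mu.part i ≤ min (l1.part i) (l2.part i)}) ∧
    (¬ (l1.part 0 = p ∧ l2.part 0 = q ∧
        (∀ i, max (l1.part (i + 1)) (l2.part (i + 1)) ≤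
          min (l1.part i) (l2.part i))) →
      Nat.card {mu : Ptn // mu.size = d ∧
          IsPieri mu a l1 ∧ l1.part 0 = p ∧ IsPieri mu b l2 ∧ l2.part 0 = q} = 0) := by
  constructor
  · rintro ⟨hp, hq, hint⟩
    apply Nat.card_congr
    apply Equiv.subtypeEquivRight
    intro mu
    constructor
    · rintro ⟨hd, ⟨_, hle1, hge1⟩, _, ⟨_, hle2, hge2⟩, _⟩
      exact ⟨hd, fun i => ⟨max_le (hge1 i) (hge2 i), le_min (hle1 i) (hle2 i)⟩⟩
    · rintro ⟨hd, h⟩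
      refine ⟨hd, ⟨?_, fun i => ?_, fun i => ?_⟩, hp, ⟨?_, fun i => ?_, fun i => ?_⟩, hq⟩
      · rw [hs1, hd]; push_cast; ring
      · exact le_trans (h i).2 (min_le_left _ _)
      · exact le_trans (le_max_left _ _) ((h i).1)
      · rw [hs2, hd]; push_cast; ring
      · exact le_trans (h i).2 (min_le_right _ _)
      · exact le_trans (le_max_right _ _) ((h i).1)
  · intro hne
    rw [Nat.card_eq_zero]
    left
    constructor
    rintro ⟨mu, hd, ⟨_, hle1, hge1⟩, hp, ⟨_, hle2, hge2⟩, hq⟩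
    exact hne ⟨hp, hq, fun i =>
      (max_le (hge1 i) (hge2 i)).trans (le_min (hle1 i) (hle2 i))⟩
end

section
/- For r ≤ min(n,m): Σ_{d=0}^{min(m,n)} {Σ_{μ⊢d} (s_μ·h_{n−d}) ⊗ (s_μ·h_{m−d})}_{λ_1 ≤ n+m−d−r} = Σ_{r'=r}^{min(m,n)} Σ_{μ⊢r'} (s_μ·h_{n−r'}) ⊗ (s_μ·h_{m−r'}). -/
namespace SchurAux

lemma ptn_ext {p q : Ptn} (h : ∀ i, p.part i = q.part i) : p = q := by
  cases p; cases q
  simp only [Ptn.mk.injEq]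
  exact Finsupp.ext h

/-- A bound beyond which both partitions vanish. -/
def bnd (l1 l2 : Ptn) : ℕ := ((l1.part.support ∪ l2.part.support).sup id) + 1

lemma part_eq_zero (l1 l2 : Ptn) {i : ℕ} (h : bnd l1 l2 ≤ i) :
    l1.part i = 0 ∧ l2.part i = 0 := by
  constructor <;> by_contra hc
  · have hi : i ∈ l1.part.support ∪ l2.part.support :=
      Finset.mem_union_left _ (Finsupp.mem_support_iff.mpr hc)
    have := Finset.le_sup (f := id) hi
    simp only [id] at this
    unfold bnd at h; omega
  · have hi : i ∈ l1.part.support ∪ l2.part.support :=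
      Finset.mem_union_right _ (Finsupp.mem_support_iff.mpr hc)
    have := Finset.le_sup (f := id) hi
    simp only [id] at this
    unfold bnd at h; omega

lemma size_eq_sum (l : Ptn) (N : ℕ) (h : ∀ i, N ≤ i → l.part i = 0) :
    l.size = ∑ i ∈ Finset.range N, l.part i := by
  unfold Ptn.size
  refine Finsupp.sum_of_support_subset _ ?_ _ (fun i _ => rfl)
  intro i hi
  rw [Finset.mem_range]
  by_contra hlt
  exact (Finsupp.mem_support_iff.mp hi) (h i (Nat.le_of_not_lt hlt))

/-- Lower box bound: `a i = max(l1_{i+1}, l2_{i+1})`. -/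
def a (l1 l2 : Ptn) (i : ℕ) : ℕ := max (l1.part (i + 1)) (l2.part (i + 1))

/-- Upper box bound: `b i = min(l1_i, l2_i)`. -/
def b (l1 l2 : Ptn) (i : ℕ) : ℕ := min (l1.part i) (l2.part i)

lemma b_succ_le_a (l1 l2 : Ptn) (i : ℕ) : b l1 l2 (i + 1) ≤ a l1 l2 i := min_le_max

/-- Total box size: the symmetry point of the count. -/
def σc (l1 l2 : Ptn) : ℕ := ∑ i ∈ Finset.range (bnd l1 l2), (a l1 l2 i + b l1 l2 i)

lemma ab_eq_zero (l1 l2 : Ptn) {i : ℕ} (h : bnd l1 l2 ≤ i) :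
    a l1 l2 i = 0 ∧ b l1 l2 i = 0 := by
  have h1 := part_eq_zero l1 l2 h
  have h2 := part_eq_zero l1 l2 (show bnd l1 l2 ≤ i + 1 by omega)
  unfold a b
  omega

lemma key (n m : ℕ) (l1 l2 : Ptn) (h1 : l1.size = n) (h2 : l2.size = m) :
    σc l1 l2 + max (l1.part 0) (l2.part 0) = n + m := by
  set N := bnd l1 l2 with hN
  have e1 : n = ∑ i ∈ Finset.range N, l1.part i := by
    rw [← h1]; exact size_eq_sum _ _ (fun i h => (part_eq_zero l1 l2 h).1)
  have e2 : m = ∑ i ∈ Finset.range N, l2.part i := by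
    rw [← h2]; exact size_eq_sum _ _ (fun i h => (part_eq_zero l1 l2 h).2)
  have emax : ∑ i ∈ Finset.range (N + 1), max (l1.part i) (l2.part i)
      = (∑ i ∈ Finset.range N, a l1 l2 i) + max (l1.part 0) (l2.part 0) := by
    rw [Finset.sum_range_succ']
    simp [a]
  have emax2 : ∑ i ∈ Finset.range (N + 1), max (l1.part i) (l2.part i)
      = ∑ i ∈ Finset.range N, max (l1.part i) (l2.part i) := by
    rw [Finset.sum_range_succ]
    have := part_eq_zero l1 l2 (le_refl N)
    omega
  have etot : ∑ i ∈ Finset.range N, (max (l1.part i) (l2.part i) + b l1 l2 i)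
      = (∑ i ∈ Finset.range N, l1.part i) + ∑ i ∈ Finset.range N, l2.part i := by
    rw [← Finset.sum_add_distrib]
    refine Finset.sum_congr rfl fun i _ => ?_
    unfold b; omega
  have esplit : ∑ i ∈ Finset.range N, (max (l1.part i) (l2.part i) + b l1 l2 i)
      = (∑ i ∈ Finset.range N, max (l1.part i) (l2.part i))
        + ∑ i ∈ Finset.range N, b l1 l2 i := Finset.sum_add_distrib
  have eσ : σc l1 l2 = (∑ i ∈ Finset.range N, a l1 l2 i)
      + ∑ i ∈ Finset.range N, b l1 l2 i := by
    unfold σc; rw [← hN]; exact Finset.sum_add_distrib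
  omega

lemma box_of_pieri (l1 l2 : Ptn) {mu : Ptn} {k1 k2 : ℤ}
    (hp1 : IsPieri mu k1 l1) (hp2 : IsPieri mu k2 l2) (i : ℕ) :
    a l1 l2 i ≤ mu.part i ∧ mu.part i ≤ b l1 l2 i :=
  ⟨max_le (hp1.2.2 i) (hp2.2.2 i), le_min (hp1.2.1 i) (hp2.2.1 i)⟩

lemma pieri_of_box₁ (n : ℕ) (l1 l2 : Ptn) {mu : Ptn} (h1 : l1.size = n)
    (hbox : ∀ i, a l1 l2 i ≤ mu.part i ∧ mu.part i ≤ b l1 l2 i) (d : ℕ) (hd : mu.size = d) :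
    IsPieri mu ((n : ℤ) - d) l1 := by
  refine ⟨by rw [h1, hd]; ring,
    fun i => le_trans (hbox i).2 (min_le_left _ _),
    fun i => le_trans (le_max_left _ _) (hbox i).1⟩

lemma pieri_of_box₂ (m : ℕ) (l1 l2 : Ptn) {mu : Ptn} (h2 : l2.size = m)
    (hbox : ∀ i, a l1 l2 i ≤ mu.part i ∧ mu.part i ≤ b l1 l2 i) (d : ℕ) (hd : mu.size = d) :
    IsPieri mu ((m : ℤ) - d) l2 := by
  refine ⟨by rw [h2, hd]; ring,
    fun i => le_trans (hbox i).2 (min_le_right _ _),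
    fun i => le_trans (le_max_right _ _) (hbox i).1⟩

/-- The reflection `μ_i ↦ a_i + b_i - μ_i` of a partition inside the box. -/
noncomputable def reflPtn (l1 l2 : Ptn) (mu : Ptn)
    (hbox : ∀ i, a l1 l2 i ≤ mu.part i ∧ mu.part i ≤ b l1 l2 i) : Ptn where
  part := Finsupp.onFinset (Finset.range (bnd l1 l2))
    (fun i => a l1 l2 i + b l1 l2 i - mu.part i)
    (by
      intro i hi
      have hi' : a l1 l2 i + b l1 l2 i - mu.part i ≠ 0 := hi
      rw [Finset.mem_range]
      by_contra hc
      have := ab_eq_zero l1 l2 (Nat.le_of_not_lt hc)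
      exact hi' (by omega))
  antitone' := by
    intro i
    show a l1 l2 (i + 1) + b l1 l2 (i + 1) - mu.part (i + 1)
      ≤ a l1 l2 i + b l1 l2 i - mu.part i
    have h1 := hbox i
    have h2 := hbox (i + 1)
    have h3 := b_succ_le_a l1 l2 i
    omega

lemma reflPtn_part (l1 l2 : Ptn) (mu : Ptn) (hbox) (i : ℕ) :
    (reflPtn l1 l2 mu hbox).part i = a l1 l2 i + b l1 l2 i - mu.part i := rfl

lemma reflPtn_box (l1 l2 : Ptn) (mu : Ptn) (hbox) (i : ℕ) :
    a l1 l2 i ≤ (reflPtn l1 l2 mu hbox).part i ∧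
      (reflPtn l1 l2 mu hbox).part i ≤ b l1 l2 i := by
  rw [reflPtn_part]
  have := hbox i
  omega

lemma mu_part_eq_zero (l1 l2 : Ptn) {mu : Ptn}
    (hbox : ∀ i, a l1 l2 i ≤ mu.part i ∧ mu.part i ≤ b l1 l2 i)
    {i : ℕ} (h : bnd l1 l2 ≤ i) : mu.part i = 0 := by
  have := (hbox i).2
  have := (ab_eq_zero l1 l2 h).2
  omega

lemma reflPtn_size (l1 l2 : Ptn) (mu : Ptn) (hbox) :
    mu.size + (reflPtn l1 l2 mu hbox).size = σc l1 l2 := by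
  rw [size_eq_sum mu (bnd l1 l2) (fun i h => mu_part_eq_zero l1 l2 hbox h),
    size_eq_sum (reflPtn l1 l2 mu hbox) (bnd l1 l2)
      (fun i h => mu_part_eq_zero l1 l2 (reflPtn_box l1 l2 mu hbox) h)]
  unfold σc
  rw [← Finset.sum_add_distrib]
  refine Finset.sum_congr rfl fun i _ => ?_
  rw [reflPtn_part]
  have := hbox i
  omega

/-- The Schur-basis coefficient we are counting. -/
noncomputable def fcard (n m : ℕ) (l1 l2 : Ptn) (d : ℕ) : ℕ :=
  Nat.card {mu : Ptn // mu.size = d ∧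
    IsPieri mu ((n : ℤ) - d) l1 ∧ IsPieri mu ((m : ℤ) - d) l2}

/-- The reflection as a map between the two subtypes. -/
noncomputable def mapRefl (n m : ℕ) (l1 l2 : Ptn) (h1 : l1.size = n) (h2 : l2.size = m)
    (d e : ℕ) (hde : d + e = σc l1 l2)
    (x : {mu : Ptn // mu.size = d ∧
      IsPieri mu ((n : ℤ) - d) l1 ∧ IsPieri mu ((m : ℤ) - d) l2}) :
    {mu : Ptn // mu.size = e ∧
      IsPieri mu ((n : ℤ) - e) l1 ∧ IsPieri mu ((m : ℤ) - e) l2} :=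
  ⟨reflPtn l1 l2 x.1 (fun i => box_of_pieri l1 l2 x.2.2.1 x.2.2.2 i), by
    have hbox := fun i => box_of_pieri l1 l2 x.2.2.1 x.2.2.2 i
    have hsz := reflPtn_size l1 l2 x.1 hbox
    have hs := x.2.1
    have he : (reflPtn l1 l2 x.1 hbox).size = e := by omega
    exact ⟨he,
      pieri_of_box₁ n l1 l2 h1 (reflPtn_box l1 l2 x.1 hbox) e he,
      pieri_of_box₂ m l1 l2 h2 (reflPtn_box l1 l2 x.1 hbox) e he⟩⟩

lemma card_reflect (n m : ℕ) (l1 l2 : Ptn) (h1 : l1.size = n) (h2 : l2.size = m)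
    {d e : ℕ} (hde : d + e = σc l1 l2) :
    fcard n m l1 l2 d = fcard n m l1 l2 e := by
  refine Nat.card_congr
    ⟨mapRefl n m l1 l2 h1 h2 d e hde, mapRefl n m l1 l2 h1 h2 e d (by omega), ?_, ?_⟩
  · intro x
    apply Subtype.ext
    apply ptn_ext
    intro i
    show a l1 l2 i + b l1 l2 i - (a l1 l2 i + b l1 l2 i - x.1.part i) = x.1.part i
    have := box_of_pieri l1 l2 x.2.2.1 x.2.2.2 i
    omega
  · intro x
    apply Subtype.ext
    apply ptn_ext
    intro i
    show a l1 l2 i + b l1 l2 i - (a l1 l2 i + b l1 l2 i - x.1.part i) = x.1.part i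
    have := box_of_pieri l1 l2 x.2.2.1 x.2.2.2 i
    omega

lemma bound_of_ne_zero (n m : ℕ) (l1 l2 : Ptn) (h1 : l1.size = n) (h2 : l2.size = m)
    {d : ℕ} (h : fcard n m l1 l2 d ≠ 0) : d ≤ min m n ∧ d ≤ σc l1 l2 := by
  have hne : Nonempty {mu : Ptn // mu.size = d ∧
      IsPieri mu ((n : ℤ) - d) l1 ∧ IsPieri mu ((m : ℤ) - d) l2} :=
    (Nat.card_ne_zero.mp h).1
  obtain ⟨mu, hs, hp1, hp2⟩ := hne
  have hbox := fun i => box_of_pieri l1 l2 hp1 hp2 i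
  set N := bnd l1 l2 with hN
  have hd : d = ∑ i ∈ Finset.range N, mu.part i := by
    rw [← hs]; exact size_eq_sum _ _ (fun i h => mu_part_eq_zero l1 l2 hbox h)
  have e1 : n = ∑ i ∈ Finset.range N, l1.part i := by
    rw [← h1]; exact size_eq_sum _ _ (fun i h => (part_eq_zero l1 l2 h).1)
  have e2 : m = ∑ i ∈ Finset.range N, l2.part i := by
    rw [← h2]; exact size_eq_sum _ _ (fun i h => (part_eq_zero l1 l2 h).2)
  have hb1 : ∑ i ∈ Finset.range N, mu.part i ≤ ∑ i ∈ Finset.range N, l1.part i :=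
    Finset.sum_le_sum fun i _ => le_trans (hbox i).2 (min_le_left _ _)
  have hb2 : ∑ i ∈ Finset.range N, mu.part i ≤ ∑ i ∈ Finset.range N, l2.part i :=
    Finset.sum_le_sum fun i _ => le_trans (hbox i).2 (min_le_right _ _)
  have hb3 : ∑ i ∈ Finset.range N, mu.part i
      ≤ ∑ i ∈ Finset.range N, (a l1 l2 i + b l1 l2 i) :=
    Finset.sum_le_sum fun i _ => by have := (hbox i).2; unfold b at this ⊢; omega
  have hσ : σc l1 l2 = ∑ i ∈ Finset.range N, (a l1 l2 i + b l1 l2 i) := by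
    unfold σc; rw [← hN]
  omega

lemma card_zero_of_ne (n m : ℕ) (l1 l2 : Ptn)
    (hne : ¬(l1.size = n ∧ l2.size = m)) (d : ℕ) : fcard n m l1 l2 d = 0 := by
  unfold fcard
  rw [Nat.card_eq_zero]
  left
  rw [isEmpty_subtype]
  rintro mu ⟨hs, hp1, hp2⟩
  have e1 := hp1.1
  have e2 := hp2.1
  exact hne ⟨by omega, by omega⟩

end SchurAux

/- STATEMENT 17.  Coefficientwise form (in the Schur basis of `Λ ⊗ Λ`) of
  `Σ_{d=0}^{min(m,n)} {Σ_{μ⊢d} (s_μ·h_{n−d}) ⊗ (s_μ·h_{m−d})}_{λ_1 ≤ n+m−d−r}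
     = Σ_{r'=r}^{min(m,n)} Σ_{μ⊢r'} (s_μ·h_{n−r'}) ⊗ (s_μ·h_{m−r'})`.
The truncation `{·}_{λ_1 ≤ n+m−d−r}` keeps exactly the terms `s_{λ¹} ⊗ s_{λ²}`
with both `λ¹_1 ≤ n+m−d−r` and `λ²_1 ≤ n+m−d−r`. -/
theorem schur_sum_eq (n m r : ℕ) (hr : r ≤ min n m) (l1 l2 : Ptn) :
    (∑ d ∈ Finset.range (min m n + 1),
      if l1.part 0 + d + r ≤ n + m ∧ l2.part 0 + d + r ≤ n + m then
        Nat.card {mu : Ptn // mu.size = d ∧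
          IsPieri mu ((n : ℤ) - d) l1 ∧ IsPieri mu ((m : ℤ) - d) l2}
      else 0) =
    ∑ r' ∈ Finset.Icc r (min m n),
      Nat.card {mu : Ptn // mu.size = r' ∧
        IsPieri mu ((n : ℤ) - r') l1 ∧ IsPieri mu ((m : ℤ) - r') l2} := by
  classical
  open SchurAux in
  show (∑ d ∈ Finset.range (min m n + 1),
      if l1.part 0 + d + r ≤ n + m ∧ l2.part 0 + d + r ≤ n + m then
        fcard n m l1 l2 d else 0)
    = ∑ d ∈ Finset.Icc r (min m n), fcard n m l1 l2 d
  by_cases hsz : l1.size = n ∧ l2.size = m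
  · obtain ⟨h1, h2⟩ := hsz
    set σ := SchurAux.σc l1 l2 with hσ
    have hkey := SchurAux.key n m l1 l2 h1 h2
    have k1 : σ + l1.part 0 ≤ n + m := by
      have := le_max_left (l1.part 0) (l2.part 0); omega
    have k2 : σ + l2.part 0 ≤ n + m := by
      have := le_max_right (l1.part 0) (l2.part 0); omega
    have k3 : σ + l1.part 0 = n + m ∨ σ + l2.part 0 = n + m := by
      rcases max_choice (l1.part 0) (l2.part 0) with h | h
      · left; omega
      · right; omega
    set X : Finset ℕ := (Finset.range (min m n + 1)).filter (fun d => d + r ≤ σ) with hX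
    set X' : Finset ℕ := X.filter (fun d => SchurAux.fcard n m l1 l2 (σ - d) ≠ 0) with hX'
    set Y : Finset ℕ := Finset.Icc r (min m n) with hY
    set Y' : Finset ℕ := Y.filter (fun d => SchurAux.fcard n m l1 l2 d ≠ 0) with hY'
    have step1 : (∑ d ∈ Finset.range (min m n + 1),
        if l1.part 0 + d + r ≤ n + m ∧ l2.part 0 + d + r ≤ n + m then
          SchurAux.fcard n m l1 l2 d else 0)
        = ∑ d ∈ X, SchurAux.fcard n m l1 l2 d := by
      rw [hX, Finset.sum_filter]
      refine Finset.sum_congr rfl fun d _ => ?_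
      have hiff : (l1.part 0 + d + r ≤ n + m ∧ l2.part 0 + d + r ≤ n + m)
          ↔ d + r ≤ σ := by omega
      rw [if_congr hiff rfl rfl]
    have step2 : ∑ d ∈ X, SchurAux.fcard n m l1 l2 d
        = ∑ d ∈ X, SchurAux.fcard n m l1 l2 (σ - d) := by
      refine Finset.sum_congr rfl fun d hd => ?_
      rw [hX, Finset.mem_filter] at hd
      exact SchurAux.card_reflect n m l1 l2 h1 h2 (show d + (σ - d) = σ by omega)
    have step3 : ∑ d ∈ X, SchurAux.fcard n m l1 l2 (σ - d)
        = ∑ d ∈ X', SchurAux.fcard n m l1 l2 (σ - d) := by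
      refine (Finset.sum_subset (Finset.filter_subset _ _) fun x hx hnx => ?_).symm
      by_contra h
      exact hnx (Finset.mem_filter.mpr ⟨hx, h⟩)
    have step5 : ∑ d ∈ Y', SchurAux.fcard n m l1 l2 d
        = ∑ d ∈ Y, SchurAux.fcard n m l1 l2 d := by
      refine Finset.sum_subset (Finset.filter_subset _ _) fun x hx hnx => ?_
      by_contra h
      exact hnx (Finset.mem_filter.mpr ⟨hx, h⟩)
    have step4 : ∑ d ∈ X', SchurAux.fcard n m l1 l2 (σ - d)
        = ∑ d ∈ Y', SchurAux.fcard n m l1 l2 d := by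
      refine Finset.sum_nbij' (fun d => σ - d) (fun d => σ - d) ?_ ?_ ?_ ?_ ?_
      · intro d hd
        simp only [hX', hX, hY', hY, Finset.mem_filter, Finset.mem_range,
          Finset.mem_Icc] at hd ⊢
        obtain ⟨⟨hdr, hdσ⟩, hne⟩ := hd
        have hb := SchurAux.bound_of_ne_zero n m l1 l2 h1 h2 hne
        refine ⟨⟨by omega, by omega⟩, ?_⟩
        exact hne
      · intro d hd
        simp only [hX', hX, hY', hY, Finset.mem_filter, Finset.mem_range,
          Finset.mem_Icc] at hd ⊢
        obtain ⟨⟨hrd, hdm⟩, hne⟩ := hd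
        have hb := SchurAux.bound_of_ne_zero n m l1 l2 h1 h2 hne
        have heq : SchurAux.fcard n m l1 l2 (σ - d) = SchurAux.fcard n m l1 l2 d := by
          exact (SchurAux.card_reflect n m l1 l2 h1 h2
            (show d + (σ - d) = σ by omega)).symm
        have hne' : SchurAux.fcard n m l1 l2 (σ - d) ≠ 0 := by rw [heq]; exact hne
        have hb' := SchurAux.bound_of_ne_zero n m l1 l2 h1 h2 hne'
        have hj : σ - (σ - d) = d := by omega
        refine ⟨⟨by omega, by omega⟩, ?_⟩
        rw [hj]; exact hne
      · intro d hd
        simp only [hX', hX, Finset.mem_filter, Finset.mem_range] at hd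
        show σ - (σ - d) = d
        omega
      · intro d hd
        simp only [hY', hY, Finset.mem_filter, Finset.mem_Icc] at hd
        obtain ⟨⟨hrd, hdm⟩, hne⟩ := hd
        have hb := SchurAux.bound_of_ne_zero n m l1 l2 h1 h2 hne
        show σ - (σ - d) = d
        omega
      · intro d _
        rfl
    rw [step1, step2, step3, step4, step5]
  · have hz : ∀ d : ℕ, SchurAux.fcard n m l1 l2 d = 0 :=
      SchurAux.card_zero_of_ne n m l1 l2 hsz
    simp only [hz, ite_self]
    simp
end
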